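/- If G is a filter on Q(α) that is generic with respect to the dense sets D_β = {p : α(p) > β} for all β < α, and we set S_n = ⋃{p(n) : p ∈ G} (viewed as a function α → 2), then for all n and all γ < α: S_{n+1}(γ) = 1 implies S_n(δ) = 0 for all sufficiently large δ ∈ b_γ. -/
import Mathlib


open Ordinal

/-- A condition in `Q(α)`: a sequence `p = ⟨p(n) : n ∈ ω⟩` where each `p(n)`
is a function from `α(p)` to `2` for some `α(p) < α`.  We represent `p(n)` as a
total function into `Bool` which is `false` off the domain (so conditions are
canonical and extensionality holds). -/
structure QCond (α : Ordinal) where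
  len : Ordinal
  len_lt : len < α
  f : ℕ → Ordinal → Bool
  f_off : ∀ n δ, len ≤ δ → f n δ = false

/-- The extension relation of `Q(α)`, relative to the partition `b` of the odd
ordinals below `α`: `p ≤ q` iff `α(p) ≥ α(q)`, each `p(n)` extends `q(n)`, and
whenever `q(n+1)(γ) = 1` and `δ ∈ b γ ∩ [α(q), α(p))` then `p(n)(δ) = 0`. -/
def QExt {α : Ordinal} (b : Ordinal → Set Ordinal) (p q : QCond α) : Prop :=
  q.len ≤ p.len ∧
  (∀ n δ, δ < q.len → p.f n δ = q.f n δ) ∧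
  (∀ n γ δ, γ < q.len → q.f (n+1) γ = true → δ ∈ b γ → q.len ≤ δ → δ < p.len →
    p.f n δ = false)

/-- if `G` is a filter on `Q(α)` meeting each dense set
`D_β = {p : α(p) > β}` and `S_n = ⋃ {p(n) : p ∈ G}`, then for all `n` and
`γ < α`, `S_{n+1}(γ) = 1` implies `S_n(δ) = 0` for all sufficiently large
`δ ∈ b_γ`. -/
theorem generic_union_coherence (α : Ordinal) (b : Ordinal → Set Ordinal)
    (hb : ∀ γ, b γ ⊆ Set.Iio α)   -- pieces of the partition live below α
    (G : Set (QCond α))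
    -- `G` is a filter: downward directed and upward closed
    (hdir : ∀ p ∈ G, ∀ q ∈ G, ∃ r ∈ G, QExt b r p ∧ QExt b r q)
    (hup : ∀ p ∈ G, ∀ q, QExt b p q → q ∈ G)
    -- `G` meets every `D_β = {p : α(p) > β}`, `β < α`
    (hgen : ∀ β < α, ∃ p ∈ G, β < p.len)
    -- `S_n` is the union of the `p(n)` for `p ∈ G`
    (S : ℕ → Ordinal → Bool)
    (hS : ∀ n δ, S n δ = true ↔ ∃ p ∈ G, δ < p.len ∧ p.f n δ = true) :
    ∀ n, ∀ γ < α, S (n+1) γ = true →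
      ∃ β < α, ∀ δ ∈ b γ, β ≤ δ → S n δ = false := by
  intro n γ hγ hSγ
  obtain ⟨p, hpG, hγp, hpf⟩ := (hS (n+1) γ).1 hSγ
  refine ⟨p.len, p.len_lt, fun δ hδb hδβ => ?_⟩
  by_contra h
  rw [Bool.not_eq_false, hS] at h
  obtain ⟨q, hqG, hδq, hqf⟩ := h
  obtain ⟨r, hrG, ⟨hlp, hfp, hcp⟩, ⟨hlq, hfq, _⟩⟩ := hdir p hpG q hqG
  have h1 : r.f n δ = true := (hfq n δ hδq).trans hqf
  have h2 : r.f n δ = false := hcp n γ δ hγp hpf hδb hδβ (lt_of_lt_of_le hδq hlq)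
  simp [h1] at h2
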